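/- Let θ > 0 and n ∈ ℕ, n ≥ 1. The function g(λ) = ∏_{k=1}^{n} θ/(θ + kλ) has second derivative at λ = 0 equal to n(n+1)(3n² + 7n + 2)/(12θ²). -/

import Mathlib

open Finset

lemma sumIcc_id' (n : ℕ) : ∑ k ∈ Finset.Icc 1 n, (k : ℝ) = n * (n + 1) / 2 := by
  induction n with
  | zero => simp
  | succ m ih =>
    rw [Finset.sum_Icc_succ_top (by omega), ih]
    push_cast; ring

lemma sumIcc_sq' (n : ℕ) : ∑ k ∈ Finset.Icc 1 n, (k : ℝ) ^ 2 = n * (n + 1) * (2 * n + 1) / 6 := by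
  induction n with
  | zero => simp
  | succ m ih =>
    rw [Finset.sum_Icc_succ_top (by omega), ih]
    push_cast; ring

set_option maxHeartbeats 1000000 in
/-- For the Poisson case with integer starting point `n ≥ 1`, the Laplace transform
`g(λ) = ∏_{k=1}^{n} θ/(θ + kλ)` of the first-passage area has second derivative at
`λ = 0` equal to `n(n+1)(3n² + 7n + 2)/(12θ²)`, i.e. `E[A(n)²]`. -/
theorem stmt_4 (θ : ℝ) (hθ : 0 < θ) (n : ℕ) (hn : 1 ≤ n) :
    deriv (deriv (fun lam : ℝ => ∏ k ∈ Finset.Icc 1 n, θ / (θ + (k : ℝ) * lam))) 0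
      = (n : ℝ) * ((n : ℝ) + 1) * (3 * (n : ℝ) ^ 2 + 7 * (n : ℝ) + 2) / (12 * θ ^ 2) := by
  have hθ' : (θ : ℝ) ≠ 0 := ne_of_gt hθ
  set f : ℝ → ℝ := fun lam => ∏ k ∈ Finset.Icc 1 n, θ / (θ + (k : ℝ) * lam) with hf
  set S : ℝ → ℝ := fun lam => ∑ k ∈ Finset.Icc 1 n, (-(k : ℝ) / (θ + (k : ℝ) * lam)) with hS
  set U : Set ℝ := Set.Ioo (-(θ / n)) (θ / n) with hU
  have hnpos : (0 : ℝ) < n := by exact_mod_cast hn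
  have hdiv : (0 : ℝ) < θ / n := div_pos hθ hnpos
  have hU0 : (0 : ℝ) ∈ U := ⟨by linarith, hdiv⟩
  have hUopen : IsOpen U := isOpen_Ioo
  have hpos : ∀ lam ∈ U, ∀ k ∈ Finset.Icc 1 n, 0 < θ + (k : ℝ) * lam := by
    intro lam hlam k hk
    have hk' : (k : ℝ) ≤ n := by exact_mod_cast (Finset.mem_Icc.mp hk).2
    have hk0 : (0 : ℝ) ≤ k := Nat.cast_nonneg k
    have habs : |lam| < θ / n := abs_lt.mpr ⟨hlam.1, hlam.2⟩
    have hklt : (k : ℝ) * |lam| < θ := by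
      calc (k : ℝ) * |lam| ≤ n * |lam| := mul_le_mul_of_nonneg_right hk' (abs_nonneg _)
        _ < n * (θ / n) := mul_lt_mul_of_pos_left habs hnpos
        _ = θ := by field_simp
    have h1 : -((k : ℝ) * lam) ≤ |(k : ℝ) * lam| := neg_le_abs _
    rw [abs_mul, abs_of_nonneg hk0] at h1
    linarith
  -- derivative of f on U
  have hder : ∀ lam ∈ U, HasDerivAt f (f lam * S lam) lam := by
    intro lam hlam
    have hfac : ∀ k ∈ Finset.Icc 1 n,
        HasDerivAt (fun l : ℝ => θ / (θ + (k : ℝ) * l))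
          (θ * (-(k : ℝ) / (θ + (k : ℝ) * lam) ^ 2)) lam := by
      intro k hk
      have hne : θ + (k : ℝ) * lam ≠ 0 := ne_of_gt (hpos lam hlam k hk)
      have h1 : HasDerivAt (fun l : ℝ => θ + (k : ℝ) * l) (k : ℝ) lam := by
        simpa using ((hasDerivAt_id lam).const_mul (k : ℝ)).const_add θ
      have h2 := (h1.inv hne).const_mul θ
      simpa only [div_eq_mul_inv, Pi.inv_apply] using h2
    have h := HasDerivAt.fun_finsetProd hfac
    convert h using 1
    · rfl
    · rfl
    rw [Finset.mul_sum]
    refine Finset.sum_congr rfl fun k hk => ?_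
    have hne : θ + (k : ℝ) * lam ≠ 0 := ne_of_gt (hpos lam hlam k hk)
    have hprod : (∏ j ∈ (Finset.Icc 1 n).erase k, θ / (θ + (j : ℝ) * lam))
        * (θ / (θ + (k : ℝ) * lam)) = f lam := Finset.prod_erase_mul _ _ hk
    rw [smul_eq_mul, ← hprod]
    generalize (∏ j ∈ (Finset.Icc 1 n).erase k, θ / (θ + (j : ℝ) * lam)) = P
    field_simp
  -- derivative of S at 0
  have hSder : HasDerivAt S (∑ k ∈ Finset.Icc 1 n, (k : ℝ) ^ 2 / θ ^ 2) 0 := by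
    apply HasDerivAt.fun_sum
    intro k hk
    have h1 : HasDerivAt (fun l : ℝ => θ + (k : ℝ) * l) (k : ℝ) 0 := by
      simpa using ((hasDerivAt_id (0:ℝ)).const_mul (k : ℝ)).const_add θ
    have hne : θ + (k : ℝ) * (0:ℝ) ≠ 0 := by simpa using hθ'
    have h2 := (h1.inv hne).const_mul (-(k : ℝ))
    have h3 : HasDerivAt (fun l : ℝ => -(k : ℝ) / (θ + (k : ℝ) * l))
        (-(k : ℝ) * (-(k : ℝ) / (θ + (k : ℝ) * (0:ℝ)) ^ 2)) 0 := by
      simpa only [div_eq_mul_inv, Pi.inv_apply] using h2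
    convert h3 using 1
    · rfl
    · rfl
    simp only [mul_zero, add_zero]
    field_simp
  -- values at 0
  have hf0 : f 0 = 1 := by
    simp only [hf, mul_zero, add_zero]
    rw [Finset.prod_congr rfl fun k _ => div_self hθ', Finset.prod_const_one]
  have hS0 : S 0 = -(n * (n + 1) / 2) / θ := by
    simp only [hS, mul_zero, add_zero]
    simp only [neg_div]
    rw [Finset.sum_neg_distrib, ← Finset.sum_div, sumIcc_id']
  -- second derivative
  have hmul : HasDerivAt (fun lam => f lam * S lam)
      (f 0 * S 0 * S 0 + f 0 * (∑ k ∈ Finset.Icc 1 n, (k : ℝ) ^ 2 / θ ^ 2)) 0 :=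
    (hder 0 hU0).mul hSder
  have heq : deriv f =ᶠ[nhds 0] fun lam => f lam * S lam := by
    filter_upwards [hUopen.mem_nhds hU0] with lam hlam
    exact (hder lam hlam).deriv
  rw [heq.deriv_eq, hmul.deriv]
  have hsq : ∑ k ∈ Finset.Icc 1 n, (k : ℝ) ^ 2 / θ ^ 2 = n * (n + 1) * (2 * n + 1) / 6 / θ ^ 2 := by
    rw [← Finset.sum_div, sumIcc_sq']
  rw [hf0, hS0, hsq]
  field_simp
  ring
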